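/- arXiv:2010.15418 — 2 statements merged into one kernel-verified Lean document; each statement's English description precedes it below -/
import Mathlib

section
/- (Erdős–Gallai) If G is a graph of order 4n whose matching number equals n − k for some positive integer k, then G has at most C(4n,2) − C(3n+k,2) edges, with equality if and only if G is the complement of the disjoint union of a complete graph of order 3n+k and n−k isolated vertices. -/
set_option linter.unusedSectionVars false
set_option maxHeartbeats 1000000

open Finset

noncomputable def sumE {m : ℕ} (σ : Sym2 (Fin m) → ℤ) (S : Set (Sym2 (Fin m))) : ℤ :=
  ∑ e ∈ S.toFinite.toFinset, σ e

def Kc (m : ℕ) : SimpleGraph (Fin m) := ⊤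

namespace EG

lemma c2_succ (a : ℕ) : (a + 1).choose 2 = a.choose 2 + a := by
  rw [Nat.choose_succ_succ]
  show a.choose 1 + a.choose 2 = a.choose 2 + a
  rw [Nat.choose_one_right]; omega

lemma c2_add (a b : ℕ) : (a + b).choose 2 = a.choose 2 + b.choose 2 + a * b := by
  induction b with
  | zero => simp
  | succ b ih =>
    have h1 : a + (b + 1) = (a + b) + 1 := by ring
    rw [h1, c2_succ, ih, c2_succ]
    ring

lemma two_c2 (j : ℕ) : 2 * j.choose 2 + j = j * j := by
  induction j with
  | zero => simp
  | succ j ih =>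
    rw [c2_succ]
    ring_nf
    ring_nf at ih
    omega



attribute [local instance] Classical.propDecidable

variable {V : Type*} [Fintype V] [DecidableEq V]

/-- A finset of pairwise vertex-disjoint pairs. -/
def Pd (P : Finset (Sym2 V)) : Prop :=
  ∀ e ∈ P, ∀ f ∈ P, e ≠ f → ∀ v, v ∈ e → v ∉ f

/-- endpoints of `e` as a `Finset`. -/
noncomputable def eF (e : Sym2 V) : Finset V := {e.out.1, e.out.2}

lemma mem_eF {e : Sym2 V} {v : V} : v ∈ eF e ↔ v ∈ e := by
  constructor
  · intro h
    rcases mem_insert.1 h with h | h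
    · exact h ▸ Sym2.out_fst_mem e
    · exact (mem_singleton.1 h) ▸ Sym2.out_snd_mem e
  · intro h
    have : v = e.out.1 ∨ v = e.out.2 := by
      conv at h => rw [← Quot.out_eq e]
      exact Sym2.mem_iff.1 h
    rcases this with h | h
    · exact h ▸ mem_insert_self _ _
    · exact h ▸ mem_insert_of_mem (mem_singleton_self _)

lemma pair_eq {g : Sym2 V} {a b : V} (hab : a ≠ b) (ha : a ∈ g) (hb : b ∈ g) :
    g = s(a, b) :=
  Sym2.eq_of_ne_mem hab ha hb (Sym2.mem_mk_left a b) (Sym2.mem_mk_right a b)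

/-- The subgraph of `G` spanned by a finset of edges. -/
def sg (G : SimpleGraph V) (P : Finset (Sym2 V)) : G.Subgraph where
  verts := {v | ∃ e ∈ P, v ∈ e}
  Adj u v := s(u, v) ∈ P ∧ G.Adj u v
  adj_sub h := h.2
  edge_vert h := ⟨_, h.1, Sym2.mem_mk_left _ _⟩
  symm := by
    refine ⟨?_⟩
    intro u v h
    exact ⟨Sym2.eq_swap ▸ h.1, h.2.symm⟩

lemma sg_edgeSet (G : SimpleGraph V) (P : Finset (Sym2 V)) (hP : ↑P ⊆ G.edgeSet) :
    (sg G P).edgeSet = ↑P := by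
  ext e
  induction e using Sym2.ind with
  | _ u v =>
    rw [SimpleGraph.Subgraph.mem_edgeSet]
    constructor
    · intro h; exact h.1
    · intro h
      exact ⟨h, (G.mem_edgeSet).1 (hP h)⟩

lemma sg_isMatching (G : SimpleGraph V) (P : Finset (Sym2 V)) (hP : ↑P ⊆ G.edgeSet)
    (hd : Pd P) : (sg G P).IsMatching := by
  intro v hv
  obtain ⟨e, he, hve⟩ := hv
  obtain ⟨w, rfl⟩ := Sym2.mem_iff_exists.1 hve
  refine ⟨w, ⟨he, (G.mem_edgeSet).1 (hP he)⟩, ?_⟩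
  intro y hy
  by_contra hne
  have hne2 : s(v, y) ≠ s(v, w) := by
    intro hcon
    exact hne (Sym2.congr_right.1 hcon)
  exact hd _ hy.1 _ he hne2 v (Sym2.mem_mk_left _ _) (Sym2.mem_mk_left _ _)

lemma card_le_of_max {G : SimpleGraph V} {s : ℕ}
    (hmax : ∀ M : G.Subgraph, M.IsMatching → M.edgeSet.ncard ≤ s)
    (P : Finset (Sym2 V)) (hP : ↑P ⊆ G.edgeSet) (hd : Pd P) : P.card ≤ s := by
  have := hmax (sg G P) (sg_isMatching G P hP hd)
  rwa [sg_edgeSet G P hP, Set.ncard_coe_finset] at this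

lemma matching_finset {G : SimpleGraph V} (M : G.Subgraph) (hM : M.IsMatching) :
    ∃ P : Finset (Sym2 V), ↑P ⊆ G.edgeSet ∧ Pd P ∧ P.card = M.edgeSet.ncard := by
  refine ⟨(Set.toFinite M.edgeSet).toFinset, ?_, ?_, ?_⟩
  · rw [Set.Finite.coe_toFinset]
    exact M.edgeSet_subset
  · intro e he f hf hef v hve hvf
    rw [Set.Finite.mem_toFinset] at he hf
    obtain ⟨a, rfl⟩ := Sym2.mem_iff_exists.1 hve
    obtain ⟨b, rfl⟩ := Sym2.mem_iff_exists.1 hvf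
    have hva : M.Adj v a := SimpleGraph.Subgraph.mem_edgeSet.1 he
    have hvb : M.Adj v b := SimpleGraph.Subgraph.mem_edgeSet.1 hf
    obtain ⟨w, _, hw⟩ := hM (M.edge_vert hva)
    have : a = b := (hw a hva).trans (hw b hvb).symm
    exact hef (by rw [this])
  · rw [Set.ncard_eq_toFinset_card _ (Set.toFinite M.edgeSet)]

section Main

variable (G : SimpleGraph V) (P : Finset (Sym2 V))

/-- matched vertices -/
noncomputable def Wst : Finset V := univ.filter (fun v => ∃ e ∈ P, v ∈ e)

/-- unmatched vertices -/
noncomputable def Ust : Finset V := univ \ Wst P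

/-- edges meeting the unmatched set -/
noncomputable def Dset : Finset (Sym2 V) := G.edgeFinset.filter (fun g => ∃ b ∈ g, b ∈ Ust P)

/-- edges inside the matched set which are not matching edges -/
noncomputable def Cset : Finset (Sym2 V) :=
  G.edgeFinset.filter (fun g => (∀ b ∈ g, b ∈ Wst P) ∧ g ∉ P)

/-- edges from `e` to the unmatched set -/
noncomputable def Dt (e : Sym2 V) : Finset (Sym2 V) := (Dset G P).filter (fun g => ∃ a ∈ g, a ∈ e)

/-- edges from `e` to `f` -/
noncomputable def Ct (e f : Sym2 V) : Finset (Sym2 V) :=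
  (Cset G P).filter (fun g => (∃ a ∈ g, a ∈ e) ∧ (∃ b ∈ g, b ∈ f))

variable {G P} {s : ℕ}
  (hPE : ↑P ⊆ G.edgeSet) (hPd : Pd P) (hPc : P.card = s)
  (hmax : ∀ Q : Finset (Sym2 V), ↑Q ⊆ G.edgeSet → Pd Q → Q.card ≤ s)

lemma mem_W {v : V} : v ∈ Wst P ↔ ∃ e ∈ P, v ∈ e := by
  simp [Wst]

lemma mem_U {v : V} : v ∈ Ust P ↔ ∀ e ∈ P, v ∉ e := by
  simp [Ust, Wst]

include hPE hPd in
lemma W_card : (Wst P).card = 2 * P.card := by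
  have hW : Wst P = P.biUnion eF := by
    ext v
    rw [mem_W, mem_biUnion]
    exact ⟨fun ⟨e, he, hv⟩ => ⟨e, he, mem_eF.2 hv⟩, fun ⟨e, he, hv⟩ => ⟨e, he, mem_eF.1 hv⟩⟩
  rw [hW, card_biUnion]
  · rw [show 2 * P.card = ∑ _e ∈ P, 2 by rw [Finset.sum_const]; ring]
    apply Finset.sum_congr rfl
    intro e he
    have hne : e.out.1 ≠ e.out.2 := by
      intro hcon
      have hdiag : e.IsDiag := by
        have he2 : e = s(e.out.1, e.out.2) := (Quot.out_eq e).symm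
        rw [he2]
        exact Sym2.mk_isDiag_iff.2 hcon
      exact (SimpleGraph.not_isDiag_of_mem_edgeSet G (hPE he)) hdiag
    rw [eF, card_insert_of_notMem (by simpa using hne), card_singleton]
  · intro e he f hf hef
    rw [Function.onFun, Finset.disjoint_left]
    intro v hv hv2
    exact hPd e he f hf hef v (mem_eF.1 hv) (mem_eF.1 hv2)

include hPE hPd hPc hmax in
lemma U_indep {u v : V} (hu : u ∈ Ust P) (hv : v ∈ Ust P) : ¬ G.Adj u v := by
  intro hadj
  rw [mem_U] at hu hv
  have hnew : s(u, v) ∉ P := fun h => hu _ h (Sym2.mem_mk_left _ _)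
  have hQ := hmax (insert s(u, v) P) ?_ ?_
  · rw [card_insert_of_notMem hnew, hPc] at hQ
    omega
  · intro e he
    rcases mem_insert.1 (mem_coe.1 he) with rfl | h
    · exact hadj
    · exact hPE h
  · intro e he f hf hef w hwe hwf
    rcases mem_insert.1 he with rfl | he' <;> rcases mem_insert.1 hf with rfl | hf'
    · exact hef rfl
    · rcases Sym2.mem_iff.1 hwe with rfl | rfl
      · exact hu _ hf' hwf
      · exact hv _ hf' hwf
    · rcases Sym2.mem_iff.1 hwf with rfl | rfl
      · exact hu _ he' hwe
      · exact hv _ he' hwe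
    · exact hPd e he' f hf' hef w hwe hwf

include hPE hPd hPc hmax in

include hPE hPd hPc hmax in
lemma augment (R N : Finset (Sym2 V)) (hR : R ⊆ P) (hNE : ↑N ⊆ G.edgeSet)
    (hNd : Pd N)
    (hNP : ∀ g ∈ N, ∀ w, w ∈ g → ∀ f ∈ P, f ∉ R → w ∉ f)
    (hcard : R.card < N.card) : False := by
  have hdisj : Disjoint N (P \ R) := by
    rw [Finset.disjoint_left]
    intro g hgN hgPR
    obtain ⟨hgP, hgR⟩ := mem_sdiff.1 hgPR
    exact hNP g hgN g.out.1 (Sym2.out_fst_mem g) g hgP hgR (Sym2.out_fst_mem g)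
  have hQ2 := hmax (N ∪ (P \ R)) ?_ ?_
  · rw [card_union_of_disjoint hdisj, card_sdiff_of_subset hR, hPc] at hQ2
    have hRs : R.card ≤ s := hPc ▸ card_le_card hR
    omega
  · intro g hg
    rcases mem_union.1 (mem_coe.1 hg) with h | h
    · exact hNE h
    · exact hPE (mem_sdiff.1 h).1
  · intro g hg g' hg' hne w hwg hwg'
    rcases mem_union.1 hg with h | h <;> rcases mem_union.1 hg' with h' | h'
    · exact hNd g h g' h' hne w hwg hwg'
    · exact hNP g h w hwg g' (mem_sdiff.1 h').1 (mem_sdiff.1 h').2 hwg'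
    · exact hNP g' h' w hwg' g (mem_sdiff.1 h).1 (mem_sdiff.1 h).2 hwg
    · exact hPd g (mem_sdiff.1 h).1 g' (mem_sdiff.1 h').1 hne w hwg hwg'

include hPE hPd in
lemma notU_of_mem {e : Sym2 V} {v : V} (he : e ∈ P) (hv : v ∈ e) : v ∉ Ust P :=
  fun h => (mem_U.1 h) e he hv

include hPE hPd in
lemma edge_nondiag {e : Sym2 V} (he : e ∈ P) {v : V} (hv : v ∈ e) :
    Sym2.Mem.other hv ≠ v :=
  Sym2.other_ne (SimpleGraph.not_isDiag_of_mem_edgeSet G (hPE he)) hv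

include hPE hPd hPc hmax in
/-- swap within one matching edge -/
lemma swapA2 {e : Sym2 V} (he : e ∈ P) {a b u v : V} (hab : a ≠ b) (ha : a ∈ e) (hb : b ∈ e)
    (hu : u ∈ Ust P) (hv : v ∈ Ust P) (huv : u ≠ v)
    (hau : G.Adj a u) (hbv : G.Adj b v) : False := by
  have hUe : ∀ w ∈ Ust P, w ∉ e := fun w hw => (mem_U.1 hw) e he
  have hane : s(a, u) ≠ s(b, v) := by
    intro hcon
    rcases Sym2.eq_iff.1 hcon with ⟨h1, h2⟩ | ⟨h1, h2⟩
    · exact hab h1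
    · exact hUe v hv (by rw [← h1]; exact ha)
  refine augment hPE hPd hPc hmax {e} {s(a, u), s(b, v)} ?_ ?_ ?_ ?_ ?_
  · simpa using he
  · intro g hg
    rcases mem_insert.1 (mem_coe.1 hg) with rfl | hg'
    · exact hau
    · rw [mem_singleton.1 hg']
      exact hbv
  · intro g hg g' hg' hne w hwg hwg'
    have pAB : ∀ w : V, w ∈ s(a, u) → w ∈ s(b, v) → False := by
      intro w h1 h2
      rcases Sym2.mem_iff.1 h1 with rfl | rfl
      · rcases Sym2.mem_iff.1 h2 with h | h
        · exact hab h
        · exact hUe v hv (by rw [← h]; exact ha)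
      · rcases Sym2.mem_iff.1 h2 with h | h
        · exact hUe w hu (by rw [h]; exact hb)
        · exact huv h
    rcases mem_insert.1 hg with rfl | hg2
    · rcases mem_insert.1 hg' with rfl | hg2'
      · exact hne rfl
      · rw [mem_singleton.1 hg2'] at hwg'
        exact pAB w hwg hwg'
    · rw [mem_singleton.1 hg2] at hwg hne
      rcases mem_insert.1 hg' with rfl | hg2'
      · exact pAB w hwg' hwg
      · exact hne (by rw [mem_singleton.1 hg2'])
  · intro g hg w hwg f hf hfR hwf
    have hfe : f ≠ e := by simpa using hfR
    rcases mem_insert.1 hg with rfl | hg2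
    · rcases Sym2.mem_iff.1 hwg with rfl | rfl
      · exact hPd e he f hf (Ne.symm hfe) w ha hwf
      · exact (mem_U.1 hu) f hf hwf
    · rw [mem_singleton.1 hg2] at hwg
      rcases Sym2.mem_iff.1 hwg with rfl | rfl
      · exact hPd e he f hf (Ne.symm hfe) w hb hwf
      · exact (mem_U.1 hv) f hf hwf
  · rw [card_singleton, card_insert_of_notMem (by simpa using hane), card_singleton]
    omega

include hPE hPd hPc hmax in
/-- swap across two matching edges -/
lemma swapA3 {e f : Sym2 V} (he : e ∈ P) (hf : f ∈ P) (hef : e ≠ f)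
    {a b c d u v : V} (hE : e = s(a, b)) (hF : f = s(c, d))
    (hu : u ∈ Ust P) (hv : v ∈ Ust P) (huv : u ≠ v)
    (hau : G.Adj a u) (hcv : G.Adj c v) (hbd : G.Adj b d) : False := by
  have ha : a ∈ e := hE ▸ Sym2.mem_mk_left _ _
  have hb : b ∈ e := hE ▸ Sym2.mem_mk_right _ _
  have hc : c ∈ f := hF ▸ Sym2.mem_mk_left _ _
  have hd : d ∈ f := hF ▸ Sym2.mem_mk_right _ _
  have hab : a ≠ b := by
    intro hcon
    exact (SimpleGraph.not_isDiag_of_mem_edgeSet G (hPE he)) (hE ▸ Sym2.mk_isDiag_iff.2 hcon)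
  have hcd : c ≠ d := by
    intro hcon
    exact (SimpleGraph.not_isDiag_of_mem_edgeSet G (hPE hf)) (hF ▸ Sym2.mk_isDiag_iff.2 hcon)
  have hEF : ∀ w, w ∈ e → w ∉ f := fun w => hPd e he f hf hef w
  have hUe : ∀ w ∈ Ust P, w ∉ e := fun w hw => (mem_U.1 hw) e he
  have hUf : ∀ w ∈ Ust P, w ∉ f := fun w hw => (mem_U.1 hw) f hf
  -- memberships of w in the three new edges resolve to explicit vertices
  have hmem : ∀ (x y w : V), w ∈ s(x, y) → w = x ∨ w = y := fun x y w hw => Sym2.mem_iff.1 hw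
  have hne1 : s(a, u) ≠ s(c, v) := by
    intro hcon
    rcases Sym2.eq_iff.1 hcon with ⟨h1, h2⟩ | ⟨h1, h2⟩
    · exact hEF a ha (by rw [h1]; exact hc)
    · exact hUe v hv (by rw [← h1]; exact ha)
  have hne2 : s(a, u) ≠ s(b, d) := by
    intro hcon
    rcases Sym2.eq_iff.1 hcon with ⟨h1, h2⟩ | ⟨h1, h2⟩
    · exact hab h1
    · exact hEF a ha (by rw [h1]; exact hd)
  have hne3 : s(c, v) ≠ s(b, d) := by
    intro hcon
    rcases Sym2.eq_iff.1 hcon with ⟨h1, h2⟩ | ⟨h1, h2⟩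
    · exact hEF b hb (by rw [← h1]; exact hc)
    · exact hcd h1
  refine augment hPE hPd hPc hmax {e, f} {s(a, u), s(c, v), s(b, d)} ?_ ?_ ?_ ?_ ?_
  · intro g hg
    rcases mem_insert.1 hg with rfl | hg'
    · exact he
    · rw [mem_singleton.1 hg']
      exact hf
  · intro g hg
    rcases mem_insert.1 (mem_coe.1 hg) with rfl | hg'
    · exact hau
    rcases mem_insert.1 hg' with rfl | hg''
    · exact hcv
    · rw [mem_singleton.1 hg'']
      exact hbd
  · intro g hg g' hg' hne w hwg hwg'
    have pAC : ∀ w : V, w ∈ s(a, u) → w ∈ s(c, v) → False := by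
      intro w h1 h2
      rcases Sym2.mem_iff.1 h1 with rfl | rfl
      · rcases Sym2.mem_iff.1 h2 with h | h
        · exact hEF w ha (by rw [h]; exact hc)
        · exact hUe v hv (by rw [← h]; exact ha)
      · rcases Sym2.mem_iff.1 h2 with h | h
        · exact (mem_U.1 hu) f hf (by rw [h]; exact hc)
        · exact huv h
    have pABd : ∀ w : V, w ∈ s(a, u) → w ∈ s(b, d) → False := by
      intro w h1 h2
      rcases Sym2.mem_iff.1 h1 with rfl | rfl
      · rcases Sym2.mem_iff.1 h2 with h | h
        · exact hab h
        · exact hEF w ha (by rw [h]; exact hd)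
      · rcases Sym2.mem_iff.1 h2 with h | h
        · exact hUe w hu (by rw [h]; exact hb)
        · exact hUf w hu (by rw [h]; exact hd)
    have pCBd : ∀ w : V, w ∈ s(c, v) → w ∈ s(b, d) → False := by
      intro w h1 h2
      rcases Sym2.mem_iff.1 h1 with rfl | rfl
      · rcases Sym2.mem_iff.1 h2 with h | h
        · exact hEF b hb (by rw [← h]; exact hc)
        · exact hcd h
      · rcases Sym2.mem_iff.1 h2 with h | h
        · exact hUe w hv (by rw [h]; exact hb)
        · exact hUf w hv (by rw [h]; exact hd)
    rcases mem_insert.1 hg with rfl | hg2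
    · rcases mem_insert.1 hg' with rfl | hg2'
      · exact hne rfl
      rcases mem_insert.1 hg2' with rfl | hg3'
      · exact pAC w hwg hwg'
      · rw [mem_singleton.1 hg3'] at hwg'
        exact pABd w hwg hwg'
    rcases mem_insert.1 hg2 with rfl | hg3
    · rcases mem_insert.1 hg' with rfl | hg2'
      · exact pAC w hwg' hwg
      rcases mem_insert.1 hg2' with rfl | hg3'
      · exact hne rfl
      · rw [mem_singleton.1 hg3'] at hwg'
        exact pCBd w hwg hwg'
    · rw [mem_singleton.1 hg3] at hwg hne
      rcases mem_insert.1 hg' with rfl | hg2'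
      · exact pABd w hwg' hwg
      rcases mem_insert.1 hg2' with rfl | hg3'
      · exact pCBd w hwg' hwg
      · rw [mem_singleton.1 hg3'] at hwg'
        exact hne (by rw [mem_singleton.1 hg3'])
  · intro g hg w hwg f' hf' hfR hwf'
    have hfe : f' ≠ e ∧ f' ≠ f := by
      constructor <;> intro hcon <;> apply hfR <;> rw [hcon] <;> simp
    rcases mem_insert.1 hg with rfl | hg2
    · rcases hmem _ _ _ hwg with rfl | rfl
      · exact hPd e he f' hf' (Ne.symm hfe.1) w ha hwf'
      · exact (mem_U.1 hu) f' hf' hwf'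
    rcases mem_insert.1 hg2 with rfl | hg3
    · rcases hmem _ _ _ hwg with rfl | rfl
      · exact hPd f hf f' hf' (Ne.symm hfe.2) w hc hwf'
      · exact (mem_U.1 hv) f' hf' hwf'
    · rw [mem_singleton.1 hg3] at hwg
      rcases hmem _ _ _ hwg with rfl | rfl
      · exact hPd e he f' hf' (Ne.symm hfe.1) w hb hwf'
      · exact hPd f hf f' hf' (Ne.symm hfe.2) w hd hwf'
  · have c2 : ({e, f} : Finset (Sym2 V)).card = 2 := by
      rw [card_insert_of_notMem (by simpa using hef), card_singleton]
    have c3 : ({s(a,u), s(c,v), s(b,d)} : Finset (Sym2 V)).card = 3 := by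
      rw [card_insert_of_notMem, card_insert_of_notMem (by simpa using hne3), card_singleton]
      intro hcon
      rcases mem_insert.1 hcon with h | h
      · exact hne1 h
      · exact hne2 (mem_singleton.1 h)
    omega

lemma not_U_iff {v : V} : v ∉ Ust P ↔ v ∈ Wst P := by
  simp [Ust]

lemma mem_Dset {g : Sym2 V} :
    g ∈ Dset G P ↔ g ∈ G.edgeFinset ∧ ∃ b ∈ g, b ∈ Ust P := mem_filter

lemma mem_Cset {g : Sym2 V} :
    g ∈ Cset G P ↔ g ∈ G.edgeFinset ∧ (∀ b ∈ g, b ∈ Wst P) ∧ g ∉ P := by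
  rw [Cset, mem_filter]

lemma mem_Dt {e g : Sym2 V} :
    g ∈ Dt G P e ↔ g ∈ Dset G P ∧ ∃ a ∈ g, a ∈ e := mem_filter

lemma mem_Ct {e f g : Sym2 V} :
    g ∈ Ct G P e f ↔ g ∈ Cset G P ∧ (∃ a ∈ g, a ∈ e) ∧ (∃ b ∈ g, b ∈ f) := by
  rw [Ct, mem_filter]

lemma edge_of_edgeFinset {g : Sym2 V} (hg : g ∈ G.edgeFinset) {x y : V}
    (hx : x ∈ g) (hy : y ∈ g) (hxy : x ≠ y) : G.Adj x y := by
  have : g = s(x, y) := pair_eq hxy hx hy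
  rw [this] at hg
  exact (G.mem_edgeSet).1 (SimpleGraph.mem_edgeFinset.1 hg)

lemma nondiag_of_edgeFinset {g : Sym2 V} (hg : g ∈ G.edgeFinset) : g.out.1 ≠ g.out.2 := by
  intro hcon
  apply SimpleGraph.not_isDiag_of_mem_edgeSet G (SimpleGraph.mem_edgeFinset.1 hg)
  have he2 : g = s(g.out.1, g.out.2) := (Quot.out_eq g).symm
  rw [he2]
  exact Sym2.mk_isDiag_iff.2 hcon

include hPE hPd in
/-- Edge-count decomposition. -/
lemma decomp : G.edgeFinset.card = P.card + (Dset G P).card + (Cset G P).card := by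
  have hsplit : G.edgeFinset = P ∪ Dset G P ∪ Cset G P := by
    ext g
    constructor
    · intro hg
      by_cases h1 : g ∈ P
      · exact mem_union_left _ (mem_union_left _ h1)
      by_cases h2 : ∃ b ∈ g, b ∈ Ust P
      · exact mem_union_left _ (mem_union_right _ (mem_Dset.2 ⟨hg, h2⟩))
      · push_neg at h2
        refine mem_union_right _ (mem_Cset.2 ⟨hg, fun b hb => ?_, h1⟩)
        exact not_U_iff.1 (h2 b hb)
    · intro hg
      rcases mem_union.1 hg with hg' | hg'
      · rcases mem_union.1 hg' with h | h
        · exact SimpleGraph.mem_edgeFinset.2 (hPE h)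
        · exact (mem_Dset.1 h).1
      · exact (mem_Cset.1 hg').1
  have hd1 : Disjoint (P ∪ Dset G P) (Cset G P) := by
    rw [Finset.disjoint_left]
    intro g hg hgC
    obtain ⟨_, hW, hnP⟩ := mem_Cset.1 hgC
    rcases mem_union.1 hg with h | h
    · exact hnP h
    · obtain ⟨_, b, hb, hbU⟩ := mem_Dset.1 h
      exact (not_U_iff.2 (hW b hb)) hbU
  have hd2 : Disjoint P (Dset G P) := by
    rw [Finset.disjoint_left]
    intro g hg hgD
    obtain ⟨_, b, hb, hbU⟩ := mem_Dset.1 hgD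
    exact (mem_U.1 hbU) g hg hb
  rw [hsplit, card_union_of_disjoint hd1, card_union_of_disjoint hd2]

include hPE hPd hPc hmax in
lemma D_card : (Dset G P).card = ∑ e ∈ P, (Dt G P e).card := by
  have hb : Dset G P = P.biUnion (fun e => Dt G P e) := by
    ext g
    constructor
    · intro hg
      obtain ⟨hgE, b, hb, hbU⟩ := mem_Dset.1 hg
      set a := Sym2.Mem.other hb with hadef
      have hag : a ∈ g := Sym2.other_mem hb
      have hab : a ≠ b := by
        intro hcon
        apply SimpleGraph.not_isDiag_of_mem_edgeSet G (SimpleGraph.mem_edgeFinset.1 hgE)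
        have : g = s(b, a) := (Sym2.other_spec hb).symm
        rw [this]
        exact Sym2.mk_isDiag_iff.2 hcon.symm
      have haW : a ∈ Wst P := by
        by_contra hcon
        have haU : a ∈ Ust P := by
          rw [Ust, mem_sdiff]
          exact ⟨mem_univ _, fun h => hcon h⟩
        exact U_indep hPE hPd hPc hmax haU hbU (edge_of_edgeFinset hgE hag hb hab)
      obtain ⟨e, he, hae⟩ := mem_W.1 haW
      exact mem_biUnion.2 ⟨e, he, mem_Dt.2 ⟨hg, a, hag, hae⟩⟩
    · intro hg
      obtain ⟨e, _, hge⟩ := mem_biUnion.1 hg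
      exact (mem_Dt.1 hge).1
  rw [hb, card_biUnion]
  intro e he f hf hef
  rw [Function.onFun, Finset.disjoint_left]
  intro g hge hgf
  obtain ⟨hgD, a, hag, hae⟩ := mem_Dt.1 hge
  obtain ⟨_, a', hag', haf⟩ := mem_Dt.1 hgf
  obtain ⟨_, b, hb, hbU⟩ := mem_Dset.1 hgD
  have haa : a ≠ a' := by
    intro hcon
    exact hPd e he f hf hef a hae (hcon ▸ haf)
  have hba : b ≠ a := fun h => (mem_U.1 hbU) e he (h ▸ hae)
  have hba' : b ≠ a' := fun h => (mem_U.1 hbU) f hf (h ▸ haf)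
  have : g = s(a, a') := pair_eq haa hag hag'
  rw [this] at hb
  rcases Sym2.mem_iff.1 hb with h | h
  · exact hba h
  · exact hba' h

include hPE hPd in
lemma C_card : ∑ p ∈ P.offDiag, (Ct G P p.1 p.2).card = 2 * (Cset G P).card := by
  have hstep : ∀ p ∈ P.offDiag, (Ct G P p.1 p.2).card
      = ∑ g ∈ Cset G P, if (∃ a ∈ g, a ∈ p.1) ∧ (∃ b ∈ g, b ∈ p.2) then 1 else 0 := by
    intro p _
    rw [Ct, Finset.card_filter]
  rw [Finset.sum_congr rfl hstep, Finset.sum_comm]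
  have huniq : ∀ h1 ∈ P, ∀ h2 ∈ P, ∀ w : V, w ∈ h1 → w ∈ h2 → h1 = h2 := by
    intro h1 hh1 h2 hh2 w hw1 hw2
    by_contra hcon
    exact hPd h1 hh1 h2 hh2 hcon w hw1 hw2
  have hper : ∀ g ∈ Cset G P,
      (∑ p ∈ P.offDiag, if (∃ a ∈ g, a ∈ p.1) ∧ (∃ b ∈ g, b ∈ p.2) then 1 else 0) = 2 := by
    intro g hg
    obtain ⟨hgE, hgW, hgP⟩ := mem_Cset.1 hg
    have hxy := nondiag_of_edgeFinset hgE
    have hgxy : g = s(g.out.1, g.out.2) := (Quot.out_eq g).symm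
    have hx : g.out.1 ∈ g := Sym2.out_fst_mem g
    have hy : g.out.2 ∈ g := Sym2.out_snd_mem g
    obtain ⟨e, he, hxe⟩ := mem_W.1 (hgW _ hx)
    obtain ⟨f, hf, hyf⟩ := mem_W.1 (hgW _ hy)
    have hef : e ≠ f := by
      intro hcon
      apply hgP
      have h2 : e = s(g.out.1, g.out.2) := pair_eq hxy hxe (hcon ▸ hyf)
      rw [hgxy, ← h2]
      exact he
    rw [← Finset.card_filter]
    have hfe : (P.offDiag.filter fun p => (∃ a ∈ g, a ∈ p.1) ∧ (∃ b ∈ g, b ∈ p.2))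
        = {(e, f), (f, e)} := by
      ext p
      rw [mem_filter]
      constructor
      · rintro ⟨hpo, ⟨a, hag, hap1⟩, ⟨b, hbg, hbp2⟩⟩
        obtain ⟨hp1, hp2, hpne⟩ := Finset.mem_offDiag.1 hpo
        have h1 : p.1 = e ∨ p.1 = f := by
          rw [hgxy] at hag
          rcases Sym2.mem_iff.1 hag with rfl | rfl
          · exact Or.inl (huniq _ hp1 _ he _ hap1 hxe)
          · exact Or.inr (huniq _ hp1 _ hf _ hap1 hyf)
        have h2 : p.2 = e ∨ p.2 = f := by
          rw [hgxy] at hbg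
          rcases Sym2.mem_iff.1 hbg with rfl | rfl
          · exact Or.inl (huniq _ hp2 _ he _ hbp2 hxe)
          · exact Or.inr (huniq _ hp2 _ hf _ hbp2 hyf)
        rcases h1 with h1 | h1 <;> rcases h2 with h2 | h2
        · exact absurd (h1.trans h2.symm) hpne
        · exact mem_insert.2 (Or.inl (Prod.ext h1 h2))
        · exact mem_insert.2 (Or.inr (mem_singleton.2 (Prod.ext h1 h2)))
        · exact absurd (h1.trans h2.symm) hpne
      · intro hp
        rcases mem_insert.1 hp with rfl | hp'
        · exact ⟨Finset.mem_offDiag.2 ⟨he, hf, hef⟩, ⟨_, hx, hxe⟩, ⟨_, hy, hyf⟩⟩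
        · rw [mem_singleton.1 hp']
          exact ⟨Finset.mem_offDiag.2 ⟨hf, he, hef.symm⟩, ⟨_, hy, hyf⟩, ⟨_, hx, hxe⟩⟩
    rw [hfe, card_insert_of_notMem, card_singleton]
    intro hcon
    exact hef (congrArg Prod.fst (mem_singleton.1 hcon))
  rw [Finset.sum_congr rfl hper, Finset.sum_const, smul_eq_mul, mul_comm]

include hPE in
/-- representation of an edge in `Dt e` -/
lemma Dt_rep (he : e ∈ P) {g : Sym2 V} (hg : g ∈ Dt G P e) :
    ∃ a u, a ∈ e ∧ u ∈ Ust P ∧ g = s(a, u) ∧ G.Adj a u := by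
  obtain ⟨hgD, a, hag, hae⟩ := mem_Dt.1 hg
  obtain ⟨hgE, b, hb, hbU⟩ := mem_Dset.1 hgD
  have hab : a ≠ b := fun h => (mem_U.1 hbU) e he (h ▸ hae)
  exact ⟨a, b, hae, hbU, pair_eq hab hag hb, edge_of_edgeFinset hgE hag hb hab⟩

/-- a star-type bound: a collection of U-edges based in `B` where any two edges with
distinct base points share the U-endpoint has size at most `max |B| |U|`. -/
lemma star_bound (T : Finset (Sym2 V)) (B : Finset V)
    (hBU : ∀ a ∈ B, a ∉ Ust P)
    (hrep : ∀ g ∈ T, ∃ a u, a ∈ B ∧ u ∈ Ust P ∧ g = s(a, u))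
    (hswap : ∀ g ∈ T, ∀ g' ∈ T, ∀ a u a' u', a ∈ B → u ∈ Ust P → a' ∈ B → u' ∈ Ust P →
      g = s(a, u) → g' = s(a', u') → a ≠ a' → u = u') :
    T.card ≤ B.card ∨ ∃ a ∈ B, T ⊆ (Ust P).image (fun u => s(a, u)) := by
  rcases T.eq_empty_or_nonempty with rfl | ⟨g0, hg0⟩
  · exact Or.inl (by simp)
  obtain ⟨a0, u0, ha0, hu0, hrep0⟩ := hrep g0 hg0
  by_cases hsrc : ∀ g ∈ T, ∀ a u, a ∈ B → u ∈ Ust P → g = s(a, u) → a = a0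
  · refine Or.inr ⟨a0, ha0, ?_⟩
    intro g hg
    obtain ⟨a, u, ha, hu, hrepg⟩ := hrep g hg
    have : a = a0 := hsrc g hg a u ha hu hrepg
    exact mem_image.2 ⟨u, hu, by rw [← this, ← hrepg]⟩
  · push_neg at hsrc
    obtain ⟨g1, hg1, a1, u1, ha1, hu1, hrep1, hne1⟩ := hsrc
    have hkey : ∀ g ∈ T, ∀ a u, a ∈ B → u ∈ Ust P → g = s(a, u) → u = u1 := by
      intro g hg a u ha hu hrepg
      by_cases hcase : a = a1
      · have haa0 : a ≠ a0 := fun h => hne1 (hcase ▸ h)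
        have h1 : u = u0 := hswap g hg g0 hg0 a u a0 u0 ha hu ha0 hu0 hrepg hrep0 haa0
        have h2 : u1 = u0 := hswap g1 hg1 g0 hg0 a1 u1 a0 u0 ha1 hu1 ha0 hu0 hrep1 hrep0 hne1
        rw [h1, h2]
      · exact hswap g hg g1 hg1 a u a1 u1 ha hu ha1 hu1 hrepg hrep1 hcase
    have hsub : T ⊆ B.image (fun a => s(a, u1)) := by
      intro g hg
      obtain ⟨a, u, ha, hu, hrepg⟩ := hrep g hg
      have : u = u1 := hkey g hg a u ha hu hrepg
      exact mem_image.2 ⟨a, ha, by rw [← this, ← hrepg]⟩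
    exact Or.inl ((card_le_card hsub).trans card_image_le)


lemma mem_out {e : Sym2 V} {v : V} : v ∈ e ↔ v = e.out.1 ∨ v = e.out.2 := by
  conv_lhs => rw [show e = s(e.out.1, e.out.2) from (Quot.out_eq e).symm]
  exact Sym2.mem_iff

include hPE hPd in
lemma eF_card {e : Sym2 V} (he : e ∈ P) : (eF e).card = 2 := by
  have hne : e.out.1 ≠ e.out.2 := by
    intro hcon
    apply SimpleGraph.not_isDiag_of_mem_edgeSet G (hPE he)
    rw [show e = s(e.out.1, e.out.2) from (Quot.out_eq e).symm]
    exact Sym2.mk_isDiag_iff.2 hcon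
  rw [eF, card_insert_of_notMem (by simpa using hne), card_singleton]

include hPE hPd hPc hmax in
lemma Dt_swap {e : Sym2 V} (he : e ∈ P) {g g' : Sym2 V} (hg : g ∈ Dt G P e)
    (hg' : g' ∈ Dt G P e) {a u a' u' : V} (ha : a ∈ e) (hu : u ∈ Ust P) (ha' : a' ∈ e)
    (hu' : u' ∈ Ust P) (hrg : g = s(a, u)) (hrg' : g' = s(a', u')) (haa : a ≠ a') : u = u' := by
  by_contra huu
  have hgE := (mem_Dset.1 (mem_Dt.1 hg).1).1
  have hgE' := (mem_Dset.1 (mem_Dt.1 hg').1).1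
  have hau : G.Adj a u := by
    have hne : a ≠ u := fun h => (mem_U.1 hu) e he (h ▸ ha)
    exact edge_of_edgeFinset hgE (hrg ▸ Sym2.mem_mk_left a u) (hrg ▸ Sym2.mem_mk_right a u) hne
  have hau' : G.Adj a' u' := by
    have hne : a' ≠ u' := fun h => (mem_U.1 hu') e he (h ▸ ha')
    exact edge_of_edgeFinset hgE' (hrg' ▸ Sym2.mem_mk_left a' u')
      (hrg' ▸ Sym2.mem_mk_right a' u') hne
  exact swapA2 hPE hPd hPc hmax he haa ha ha' hu hu' huu hau hau'

include hPE hPd hPc hmax in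
lemma de_le {e : Sym2 V} (he : e ∈ P) (hU2 : 2 ≤ (Ust P).card) :
    (Dt G P e).card ≤ (Ust P).card := by
  have hrep : ∀ g ∈ Dt G P e, ∃ a u, a ∈ eF e ∧ u ∈ Ust P ∧ g = s(a, u) := by
    intro g hg
    obtain ⟨a, u, hae, hu, hr, _⟩ := Dt_rep hPE he hg
    exact ⟨a, u, mem_eF.2 hae, hu, hr⟩
  have hsb := star_bound (Dt G P e) (eF e)
    (fun a haB => notU_of_mem hPE hPd he (mem_eF.1 haB)) hrep ?_
  · rcases hsb with h | ⟨a, _, hsub⟩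
    · calc (Dt G P e).card ≤ (eF e).card := h
        _ = 2 := eF_card hPE hPd he
        _ ≤ (Ust P).card := hU2
    · exact (card_le_card hsub).trans card_image_le
  · intro g hg g' hg' a u a' u' ha hu ha' hu' hrg hrg' haa
    exact Dt_swap hPE hPd hPc hmax he hg hg' (mem_eF.1 ha) hu (mem_eF.1 ha') hu' hrg hrg' haa

include hPE hPd hPc hmax in
lemma de_eq_struct {e : Sym2 V} (he : e ∈ P) (hU3 : 3 ≤ (Ust P).card)
    (hde : (Dt G P e).card = (Ust P).card) :
    ∃ a b, e = s(a, b) ∧ a ≠ b ∧ (∀ u ∈ Ust P, G.Adj a u) ∧ (∀ u ∈ Ust P, ¬ G.Adj b u) := by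
  have hrep : ∀ g ∈ Dt G P e, ∃ a u, a ∈ eF e ∧ u ∈ Ust P ∧ g = s(a, u) := by
    intro g hg
    obtain ⟨a, u, hae, hu, hr, _⟩ := Dt_rep hPE he hg
    exact ⟨a, u, mem_eF.2 hae, hu, hr⟩
  have hsb := star_bound (Dt G P e) (eF e)
    (fun a haB => notU_of_mem hPE hPd he (mem_eF.1 haB)) hrep ?_
  swap
  · intro g hg g' hg' a u a' u' ha hu ha' hu' hrg hrg' haa
    exact Dt_swap hPE hPd hPc hmax he hg hg' (mem_eF.1 ha) hu (mem_eF.1 ha') hu' hrg hrg' haa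
  rcases hsb with h | ⟨a, haB, hsub⟩
  · rw [eF_card hPE hPd he, hde] at h
    omega
  have hae : a ∈ e := mem_eF.1 haB
  have himg : ((Ust P).image (fun u => s(a, u))).card = (Ust P).card := by
    apply card_image_of_injOn
    intro u _ u' _ hcon
    exact Sym2.congr_right.1 hcon
  have heq2 : Dt G P e = (Ust P).image (fun u => s(a, u)) :=
    Finset.eq_of_subset_of_card_le hsub (by rw [himg, hde])
  obtain ⟨b, hb⟩ := Sym2.mem_iff_exists.1 hae
  have hab : a ≠ b := by
    intro hcon
    apply SimpleGraph.not_isDiag_of_mem_edgeSet G (hPE he)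
    rw [hb]
    exact Sym2.mk_isDiag_iff.2 hcon
  refine ⟨a, b, hb, hab, ?_, ?_⟩
  · intro u hu
    have : s(a, u) ∈ Dt G P e := heq2 ▸ mem_image.2 ⟨u, hu, rfl⟩
    have hE := (mem_Dset.1 (mem_Dt.1 this).1).1
    exact (G.mem_edgeSet).1 (SimpleGraph.mem_edgeFinset.1 hE)
  · intro u hu hadj
    have hbe : b ∈ e := hb ▸ Sym2.mem_mk_right a b
    have hmem : s(b, u) ∈ Dt G P e := by
      rw [mem_Dt, mem_Dset]
      exact ⟨⟨SimpleGraph.mem_edgeFinset.2 ((G.mem_edgeSet).2 hadj),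
        u, Sym2.mem_mk_right b u, hu⟩, b, Sym2.mem_mk_left b u, hbe⟩
    rw [heq2] at hmem
    obtain ⟨u', hu', hcon⟩ := mem_image.1 hmem
    rcases Sym2.eq_iff.1 hcon with ⟨h1, _⟩ | ⟨h1, h2⟩
    · exact hab h1
    · exact (mem_U.1 hu) e he (by rw [← h1]; exact hae)

lemma ct_sub {e f : Sym2 V} (he : e ∈ P) (hf : f ∈ P) (hef : e ≠ f) (hPd : Pd P) :
    Ct G P e f ⊆ {s(e.out.1, f.out.1), s(e.out.1, f.out.2),
      s(e.out.2, f.out.1), s(e.out.2, f.out.2)} := by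
  intro g hg
  obtain ⟨hgC, ⟨a, hag, hae⟩, ⟨b, hbg, hbf⟩⟩ := mem_Ct.1 hg
  have hab : a ≠ b := by
    intro hcon
    exact hPd e he f hf hef a hae (hcon ▸ hbf)
  have hg2 : g = s(a, b) := pair_eq hab hag hbg
  rcases mem_out.1 hae with rfl | rfl <;> rcases mem_out.1 hbf with rfl | rfl <;>
    simp [hg2, mem_insert]

include hPE in
lemma ce_le {e f : Sym2 V} (he : e ∈ P) (hf : f ∈ P) (hef : e ≠ f) (hPd : Pd P) :
    (Ct G P e f).card ≤ 4 := by
  have hsub := ct_sub (G := G) he hf hef hPd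
  have h1 := card_insert_le s(e.out.1, f.out.1) ({s(e.out.1, f.out.2),
      s(e.out.2, f.out.1), s(e.out.2, f.out.2)} : Finset (Sym2 V))
  have h2 := card_insert_le s(e.out.1, f.out.2)
      ({s(e.out.2, f.out.1), s(e.out.2, f.out.2)} : Finset (Sym2 V))
  have h3 := card_insert_le s(e.out.2, f.out.1) ({s(e.out.2, f.out.2)} : Finset (Sym2 V))
  have h4 := card_singleton s(e.out.2, f.out.2)
  have h0 := card_le_card hsub
  omega


include hPE hPd in
lemma ct4_adj {e f : Sym2 V} (he : e ∈ P) (hf : f ∈ P) (hef : e ≠ f)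
    (h4 : (Ct G P e f).card = 4) : ∀ p ∈ e, ∀ q ∈ f, G.Adj p q := by
  have hsub := ct_sub (G := G) he hf hef hPd
  have hb : ({s(e.out.1, f.out.1), s(e.out.1, f.out.2),
      s(e.out.2, f.out.1), s(e.out.2, f.out.2)} : Finset (Sym2 V)).card ≤ 4 := by
    have h1 := card_insert_le s(e.out.1, f.out.1) ({s(e.out.1, f.out.2),
        s(e.out.2, f.out.1), s(e.out.2, f.out.2)} : Finset (Sym2 V))
    have h2 := card_insert_le s(e.out.1, f.out.2)
        ({s(e.out.2, f.out.1), s(e.out.2, f.out.2)} : Finset (Sym2 V))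
    have h3 := card_insert_le s(e.out.2, f.out.1) ({s(e.out.2, f.out.2)} : Finset (Sym2 V))
    have h4' := card_singleton s(e.out.2, f.out.2)
    omega
  have heq2 : Ct G P e f = {s(e.out.1, f.out.1), s(e.out.1, f.out.2),
      s(e.out.2, f.out.1), s(e.out.2, f.out.2)} :=
    Finset.eq_of_subset_of_card_le hsub (by omega)
  have hadj : ∀ g ∈ Ct G P e f, ∀ x ∈ g, ∀ y ∈ g, x ≠ y → G.Adj x y := by
    intro g hg x hx y hy hxy
    exact edge_of_edgeFinset (mem_Cset.1 (mem_Ct.1 hg).1).1 hx hy hxy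
  intro p hp q hq
  have hpq : p ≠ q := by
    intro hcon
    exact hPd e he f hf hef p hp (hcon ▸ hq)
  have hpin : ∀ (x y : V), s(x, y) ∈ Ct G P e f → p = x → q = y → G.Adj p q := by
    intro x y hmem hx hy
    exact hadj _ hmem p (by rw [hx]; exact Sym2.mem_mk_left x y)
      q (by rw [hy]; exact Sym2.mem_mk_right x y) hpq
  rcases mem_out.1 hp with h1 | h1 <;> rcases mem_out.1 hq with h2 | h2
  · exact hpin _ _ (heq2 ▸ (by simp : s(e.out.1, f.out.1) ∈ ({s(e.out.1, f.out.1),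
      s(e.out.1, f.out.2), s(e.out.2, f.out.1), s(e.out.2, f.out.2)} : Finset (Sym2 V)))) h1 h2
  · exact hpin _ _ (heq2 ▸ (by simp : s(e.out.1, f.out.2) ∈ ({s(e.out.1, f.out.1),
      s(e.out.1, f.out.2), s(e.out.2, f.out.1), s(e.out.2, f.out.2)} : Finset (Sym2 V)))) h1 h2
  · exact hpin _ _ (heq2 ▸ (by simp : s(e.out.2, f.out.1) ∈ ({s(e.out.1, f.out.1),
      s(e.out.1, f.out.2), s(e.out.2, f.out.1), s(e.out.2, f.out.2)} : Finset (Sym2 V)))) h1 h2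
  · exact hpin _ _ (heq2 ▸ (by simp : s(e.out.2, f.out.2) ∈ ({s(e.out.1, f.out.1),
      s(e.out.1, f.out.2), s(e.out.2, f.out.1), s(e.out.2, f.out.2)} : Finset (Sym2 V)))) h1 h2

include hPE hPd in
lemma Dt_disj {e f : Sym2 V} (he : e ∈ P) (hf : f ∈ P) (hef : e ≠ f) :
    Disjoint (Dt G P e) (Dt G P f) := by
  rw [Finset.disjoint_left]
  intro g hge hgf
  obtain ⟨hgD, a, hag, hae⟩ := mem_Dt.1 hge
  obtain ⟨_, a', hag', haf⟩ := mem_Dt.1 hgf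
  obtain ⟨_, b, hb, hbU⟩ := mem_Dset.1 hgD
  have haa : a ≠ a' := fun hcon => hPd e he f hf hef a hae (hcon ▸ haf)
  have hba : b ≠ a := fun h => (mem_U.1 hbU) e he (h ▸ hae)
  have hba' : b ≠ a' := fun h => (mem_U.1 hbU) f hf (h ▸ haf)
  have hgaa : g = s(a, a') := pair_eq haa hag hag'
  rw [hgaa] at hb
  rcases Sym2.mem_iff.1 hb with h | h
  · exact hba h
  · exact hba' h

include hPE hPd hPc hmax in
lemma pair_d_bound {e f : Sym2 V} (he : e ∈ P) (hf : f ∈ P) (hef : e ≠ f)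
    (hU4 : 4 ≤ (Ust P).card) (h4 : (Ct G P e f).card = 4) :
    (Dt G P e).card + (Dt G P f).card ≤ (Ust P).card := by
  have hcross := ct4_adj hPE hPd he hf hef h4
  set T := Dt G P e ∪ Dt G P f with hT
  have hTcard : T.card = (Dt G P e).card + (Dt G P f).card :=
    card_union_of_disjoint (Dt_disj hPE hPd he hf hef)
  rw [← hTcard]
  set B := eF e ∪ eF f with hB
  have hBmem : ∀ a, a ∈ B → a ∈ e ∨ a ∈ f := by
    intro a ha
    rcases mem_union.1 ha with h | h
    · exact Or.inl (mem_eF.1 h)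
    · exact Or.inr (mem_eF.1 h)
  have hrep : ∀ g ∈ T, ∃ a u, a ∈ B ∧ u ∈ Ust P ∧ g = s(a, u) := by
    intro g hg
    rcases mem_union.1 hg with h | h
    · obtain ⟨a, u, hae, hu, hr, _⟩ := Dt_rep hPE he h
      exact ⟨a, u, mem_union_left _ (mem_eF.2 hae), hu, hr⟩
    · obtain ⟨a, u, haf, hu, hr, _⟩ := Dt_rep hPE hf h
      exact ⟨a, u, mem_union_right _ (mem_eF.2 haf), hu, hr⟩
  have hadj : ∀ g ∈ T, ∀ a u, u ∈ Ust P → g = s(a, u) → (a ∈ e ∨ a ∈ f) → G.Adj a u := by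
    intro g hg a u hu hr haef
    have hgE : g ∈ G.edgeFinset := by
      rcases mem_union.1 hg with h | h
      · exact (mem_Dset.1 (mem_Dt.1 h).1).1
      · exact (mem_Dset.1 (mem_Dt.1 h).1).1
    have hne : a ≠ u := by
      intro hcon
      rcases haef with h | h
      · exact (mem_U.1 hu) e he (hcon ▸ h)
      · exact (mem_U.1 hu) f hf (hcon ▸ h)
    exact edge_of_edgeFinset hgE (hr ▸ Sym2.mem_mk_left a u) (hr ▸ Sym2.mem_mk_right a u) hne
  have hsb := star_bound T B ?_ hrep ?_
  · rcases hsb with h | ⟨a, _, hsub⟩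
    · refine h.trans ?_
      have : B.card ≤ (eF e).card + (eF f).card := card_union_le _ _
      rw [eF_card hPE hPd he, eF_card hPE hPd hf] at this
      omega
    · exact (card_le_card hsub).trans card_image_le
  · intro a haB
    rcases hBmem a haB with h | h
    · exact notU_of_mem hPE hPd he h
    · exact notU_of_mem hPE hPd hf h
  · intro g hg g' hg' a u a' u' haB hu haB' hu' hrg hrg' haa
    by_contra huu
    have hau : G.Adj a u := hadj g hg a u hu hrg (hBmem a haB)
    have hau' : G.Adj a' u' := hadj g' hg' a' u' hu' hrg' (hBmem a' haB')
    rcases hBmem a haB with h | h <;> rcases hBmem a' haB' with h' | h'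
    · exact swapA2 hPE hPd hPc hmax he haa h h' hu hu' huu hau hau'
    · obtain ⟨b, hbe⟩ := Sym2.mem_iff_exists.1 h
      obtain ⟨d, hdf⟩ := Sym2.mem_iff_exists.1 h'
      have hbd : G.Adj b d := hcross b (hbe ▸ Sym2.mem_mk_right a b) d (hdf ▸ Sym2.mem_mk_right a' d)
      exact swapA3 hPE hPd hPc hmax he hf hef hbe hdf hu hu' huu hau hau' hbd
    · obtain ⟨b, hbe⟩ := Sym2.mem_iff_exists.1 h'
      obtain ⟨d, hdf⟩ := Sym2.mem_iff_exists.1 h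
      have hbd : G.Adj b d := hcross b (hbe ▸ Sym2.mem_mk_right a' b) d (hdf ▸ Sym2.mem_mk_right a d)
      exact swapA3 hPE hPd hPc hmax he hf hef hbe hdf hu' hu (fun hcon => huu hcon.symm) hau' hau hbd
    · exact swapA2 hPE hPd hPc hmax hf haa h h' hu hu' huu hau hau'

include hPE hPd hPc hmax in
lemma pair_bound {e f : Sym2 V} (he : e ∈ P) (hf : f ∈ P) (hef : e ≠ f)
    (hU4 : 4 ≤ (Ust P).card) (hsU : s ≤ (Ust P).card) :
    (Dt G P e).card + (Dt G P f).card + (s - 1) * (Ct G P e f).card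
      ≤ 2 * (Ust P).card + 3 * (s - 1) := by
  have hU2 : 2 ≤ (Ust P).card := by omega
  have hcle := ce_le hPE he hf hef hPd
  by_cases hc : (Ct G P e f).card ≤ 3
  · have h1 := de_le hPE hPd hPc hmax he hU2
    have h2 := de_le hPE hPd hPc hmax hf hU2
    have h3 : (s - 1) * (Ct G P e f).card ≤ (s - 1) * 3 := Nat.mul_le_mul_left _ hc
    omega
  · have hc4 : (Ct G P e f).card = 4 := by omega
    have h1 := pair_d_bound hPE hPd hPc hmax he hf hef hU4 hc4
    rw [hc4]
    have h2 : s - 1 ≤ (Ust P).card := by omega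
    omega

include hPE hPd hPc hmax in
lemma pair_eq_struct {e f : Sym2 V} (he : e ∈ P) (hf : f ∈ P) (hef : e ≠ f)
    (hU4 : 4 ≤ (Ust P).card) (hsU : s < (Ust P).card) (hs2 : 2 ≤ s)
    (heq : (Dt G P e).card + (Dt G P f).card + (s - 1) * (Ct G P e f).card
      = 2 * (Ust P).card + 3 * (s - 1)) :
    (Dt G P e).card = (Ust P).card ∧ (Ct G P e f).card = 3 := by
  have hU2 : 2 ≤ (Ust P).card := by omega
  have hcle := ce_le hPE he hf hef hPd
  by_cases hc : (Ct G P e f).card ≤ 3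
  · have h1 := de_le hPE hPd hPc hmax he hU2
    have h2 := de_le hPE hPd hPc hmax hf hU2
    have h3 : (s - 1) * (Ct G P e f).card ≤ (s - 1) * 3 := Nat.mul_le_mul_left _ hc
    have h4 : (s - 1) * (Ct G P e f).card = (s - 1) * 3 := by omega
    have h5 : (Ct G P e f).card = 3 := Nat.eq_of_mul_eq_mul_left (by omega) h4
    exact ⟨by omega, h5⟩
  · exfalso
    have hc4 : (Ct G P e f).card = 4 := by omega
    have h1 := pair_d_bound hPE hPd hPc hmax he hf hef hU4 hc4
    rw [hc4] at heq
    omega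


lemma offDiag_sum (f : Sym2 V → ℕ) :
    ∑ p ∈ P.offDiag, (f p.1 + f p.2) + 2 * ∑ e ∈ P, f e
      = 2 * P.card * ∑ e ∈ P, f e := by
  have h1 : ∑ p ∈ P.diag, (f p.1 + f p.2) = 2 * ∑ e ∈ P, f e := by
    rw [Finset.sum_diag P (fun p => f p.1 + f p.2)]
    rw [Finset.sum_add_distrib]
    ring
  have h2 : ∑ p ∈ P ×ˢ P, (f p.1 + f p.2) = 2 * P.card * ∑ e ∈ P, f e := by
    rw [Finset.sum_product]
    have hstep : ∀ x ∈ P, ∑ y ∈ P, (f x + f y) = P.card * f x + ∑ y ∈ P, f y := by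
      intro x _
      rw [Finset.sum_add_distrib, Finset.sum_const, smul_eq_mul]
    rw [Finset.sum_congr rfl hstep, Finset.sum_add_distrib, ← Finset.mul_sum,
      Finset.sum_const, smul_eq_mul]
    ring
  have h3 : ∑ p ∈ P.diag, (f p.1 + f p.2) + ∑ p ∈ P.offDiag, (f p.1 + f p.2)
      = ∑ p ∈ P ×ˢ P, (f p.1 + f p.2) := by
    rw [← Finset.sum_union (Finset.disjoint_diag_offDiag P), Finset.diag_union_offDiag]
  omega

include hPE hPd hPc hmax in
lemma main_le (hU4 : 4 ≤ (Ust P).card) (hsU : s < (Ust P).card) :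
    G.edgeFinset.card ≤ s + s * (Ust P).card + 3 * s.choose 2 := by
  have hdec := decomp hPE hPd
  have hDi := D_card hPE hPd hPc hmax
  rcases Nat.lt_or_ge s 2 with hs | hs
  · rcases Nat.lt_or_ge s 1 with hs0 | hs1
    · -- s = 0
      have hP0 : P = ∅ := card_eq_zero.1 (by omega)
      have hEmpty : G.edgeFinset = ∅ := by
        rw [eq_empty_iff_forall_notMem]
        intro g hg
        have hadj := edge_of_edgeFinset hg (Sym2.out_fst_mem g) (Sym2.out_snd_mem g)
          (nondiag_of_edgeFinset hg)
        have hU : ∀ v : V, v ∈ Ust P := by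
          intro v
          rw [mem_U]
          intro e he
          rw [hP0] at he
          exact absurd he (notMem_empty e)
        exact U_indep hPE hPd hPc hmax (hU _) (hU _) hadj
      rw [hEmpty]
      simp
    · -- s = 1
      have hs1' : s = 1 := by omega
      obtain ⟨e0, hP1⟩ := card_eq_one.1 (hPc.trans hs1')
      have hC0 : (Cset G P).card = 0 := by
        have hCi := C_card hPE hPd
        have hoff : P.offDiag = ∅ := by rw [hP1]; simp
        rw [hoff, Finset.sum_empty] at hCi
        omega
      have he0 : e0 ∈ P := by rw [hP1]; exact mem_singleton_self e0
      have hde := de_le hPE hPd hPc hmax he0 (by omega)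
      have hDsum : ∑ e ∈ P, (Dt G P e).card = (Dt G P e0).card := by
        rw [hP1, Finset.sum_singleton]
      have hch : (1:ℕ).choose 2 = 0 := by decide
      rw [hs1', hch]
      omega
  · -- s ≥ 2
    obtain ⟨X, hsX⟩ : ∃ X, s = X + 1 := ⟨s - 1, by omega⟩
    have hX1 : 1 ≤ X := by omega
    have hs1 : s - 1 = X := by omega
    have hCi := C_card hPE hPd
    have hod := offDiag_sum (P := P) (fun e => (Dt G P e).card)
    have hsum_le : ∑ p ∈ P.offDiag,
        ((Dt G P p.1).card + (Dt G P p.2).card + (s-1) * (Ct G P p.1 p.2).card)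
        ≤ P.offDiag.card * (2 * (Ust P).card + 3 * (s-1)) := by
      calc ∑ p ∈ P.offDiag,
          ((Dt G P p.1).card + (Dt G P p.2).card + (s-1) * (Ct G P p.1 p.2).card)
          ≤ ∑ _p ∈ P.offDiag, (2 * (Ust P).card + 3 * (s-1)) := by
            apply Finset.sum_le_sum
            intro p hp
            obtain ⟨hp1, hp2, hpne⟩ := Finset.mem_offDiag.1 hp
            exact pair_bound hPE hPd hPc hmax hp1 hp2 hpne hU4 (le_of_lt hsU)
        _ = P.offDiag.card * (2 * (Ust P).card + 3 * (s-1)) := by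
            rw [Finset.sum_const, smul_eq_mul]
    have hsplit : ∑ p ∈ P.offDiag,
        ((Dt G P p.1).card + (Dt G P p.2).card + (s-1) * (Ct G P p.1 p.2).card)
        = ∑ p ∈ P.offDiag, ((Dt G P p.1).card + (Dt G P p.2).card)
          + ∑ p ∈ P.offDiag, (s-1) * (Ct G P p.1 p.2).card := by
      rw [← Finset.sum_add_distrib]
    have hXct : ∑ p ∈ P.offDiag, (s-1) * (Ct G P p.1 p.2).card
        = (s-1) * (2 * (Cset G P).card) := by
      rw [← Finset.mul_sum, hCi]
    have hodc : P.offDiag.card = (X+1) * X := by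
      rw [Finset.offDiag_card, hPc, hsX]
      have hexp : (X+1) * (X+1) = (X+1) * X + (X+1) := by ring
      omega
    have h2c2 : 2 * s.choose 2 = (X+1) * X := by
      have ht := two_c2 s
      have hss : s * s = (X+1) * X + s := by rw [hsX]; ring
      omega
    have hR : (X+1) * X * (2 * (Ust P).card + 3 * X)
        = 2 * X * (s * (Ust P).card + 3 * s.choose 2) := by
      calc (X+1) * X * (2 * (Ust P).card + 3 * X)
          = (X+1) * X * (2 * (Ust P).card) + 3 * X * ((X+1) * X) := by ring
        _ = (X+1) * X * (2 * (Ust P).card) + 3 * X * (2 * s.choose 2) := by rw [h2c2]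
        _ = 2 * X * ((X+1) * (Ust P).card + 3 * s.choose 2) := by ring
        _ = 2 * X * (s * (Ust P).card + 3 * s.choose 2) := by rw [hsX]
    have hA : ∑ p ∈ P.offDiag, ((Dt G P p.1).card + (Dt G P p.2).card)
        + 2 * ∑ e ∈ P, (Dt G P e).card = 2 * (X+1) * ∑ e ∈ P, (Dt G P e).card := by
      rw [hPc, hsX] at hod
      exact hod
    have hA2 : ∑ p ∈ P.offDiag, ((Dt G P p.1).card + (Dt G P p.2).card)
        = 2 * X * ∑ e ∈ P, (Dt G P e).card := by
      have hexp2 : 2 * (X+1) * ∑ e ∈ P, (Dt G P e).card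
          = 2 * X * ∑ e ∈ P, (Dt G P e).card + 2 * ∑ e ∈ P, (Dt G P e).card := by ring
      omega
    rw [hsplit, hXct, hodc, hs1] at hsum_le
    have hbridge : X * (2 * (Cset G P).card) = 2 * X * (Cset G P).card := by ring
    rw [hbridge, hA2] at hsum_le
    have hmono : 2 * X * (∑ e ∈ P, (Dt G P e).card + (Cset G P).card)
        ≤ 2 * X * (s * (Ust P).card + 3 * s.choose 2) := by
      calc 2 * X * (∑ e ∈ P, (Dt G P e).card + (Cset G P).card)
          = 2 * X * (∑ e ∈ P, (Dt G P e).card) + 2 * X * (Cset G P).card := by ring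
        _ ≤ (X+1) * X * (2 * (Ust P).card + 3 * X) := hsum_le
        _ = 2 * X * (s * (Ust P).card + 3 * s.choose 2) := hR
    have hfin : ∑ e ∈ P, (Dt G P e).card + (Cset G P).card
        ≤ s * (Ust P).card + 3 * s.choose 2 :=
      Nat.le_of_mul_le_mul_left hmono (by omega)
    omega


include hPE hPd hPc hmax in
lemma build_S (hU3 : 3 ≤ (Ust P).card)
    (hde_all : ∀ e, e ∈ P → (Dt G P e).card = (Ust P).card)
    (hct_all : ∀ e, e ∈ P → ∀ f, f ∈ P → e ≠ f → (Ct G P e f).card = 3) :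
    ∃ S : Finset V, S.card = Fintype.card V - s ∧
      ∀ u v : V, u ≠ v → (G.Adj u v ↔ ¬(u ∈ S ∧ v ∈ S)) := by
  have hstruct : ∀ e, e ∈ P → ∃ a b, e = s(a, b) ∧ a ≠ b ∧
      (∀ u ∈ Ust P, G.Adj a u) ∧ (∀ u ∈ Ust P, ¬ G.Adj b u) :=
    fun e he => de_eq_struct hPE hPd hPc hmax he hU3 (hde_all e he)
  choose A B hEq hNe hAdj hNAdj using hstruct
  have hAmem : ∀ e (he : e ∈ P), A e he ∈ e := by
    intro e he
    have h := Sym2.mem_mk_left (A e he) (B e he)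
    rwa [← hEq e he] at h
  have hBmem : ∀ e (he : e ∈ P), B e he ∈ e := by
    intro e he
    have h := Sym2.mem_mk_right (A e he) (B e he)
    rwa [← hEq e he] at h
  obtain ⟨u0, hu0, v0, hv0, huv0⟩ := Finset.one_lt_card.1 (show 1 < (Ust P).card by omega)
  have hBB : ∀ e (he : e ∈ P), ∀ f (hf : f ∈ P), e ≠ f → ¬ G.Adj (B e he) (B f hf) := by
    intro e he f hf hef hadj
    exact swapA3 hPE hPd hPc hmax he hf hef (hEq e he) (hEq f hf) hu0 hv0 huv0
      (hAdj e he u0 hu0) (hAdj f hf v0 hv0) hadj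
  have hmemAB : ∀ e (he : e ∈ P), ∀ v, v ∈ e → v = A e he ∨ v = B e he := by
    intro e he v hv
    rw [hEq e he] at hv
    exact Sym2.mem_iff.1 hv
  have hcross : ∀ e (he : e ∈ P), ∀ f (hf : f ∈ P), e ≠ f →
      G.Adj (A e he) (A f hf) ∧ G.Adj (A e he) (B f hf) ∧ G.Adj (B e he) (A f hf) := by
    intro e he f hf hef
    have hsub : Ct G P e f ⊆ {s(A e he, A f hf), s(A e he, B f hf), s(B e he, A f hf)} := by
      intro g hg
      obtain ⟨hgC, ⟨p, hpg, hpe⟩, ⟨q, hqg, hqf⟩⟩ := mem_Ct.1 hg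
      have hpq : p ≠ q := fun hcon => hPd e he f hf hef p hpe (hcon ▸ hqf)
      have hgpq : g = s(p, q) := pair_eq hpq hpg hqg
      have hgE := (mem_Cset.1 hgC).1
      rcases hmemAB e he p hpe with hp | hp <;> rcases hmemAB f hf q hqf with hq | hq
      · rw [hgpq, hp, hq]; simp
      · rw [hgpq, hp, hq]; simp
      · rw [hgpq, hp, hq]; simp
      · rw [hp, hq] at hpq
        rw [hp, hq] at hgpq
        rw [hgpq] at hgE
        exact absurd ((G.mem_edgeSet).1 (SimpleGraph.mem_edgeFinset.1 hgE))
          (hBB e he f hf hef)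
    have h3c : ({s(A e he, A f hf), s(A e he, B f hf), s(B e he, A f hf)} :
        Finset (Sym2 V)).card ≤ 3 := by
      have h1 := card_insert_le s(A e he, A f hf)
        ({s(A e he, B f hf), s(B e he, A f hf)} : Finset (Sym2 V))
      have h2 := card_insert_le s(A e he, B f hf) ({s(B e he, A f hf)} : Finset (Sym2 V))
      have h3 := card_singleton s(B e he, A f hf)
      omega
    have heq3 : Ct G P e f = {s(A e he, A f hf), s(A e he, B f hf), s(B e he, A f hf)} :=
      Finset.eq_of_subset_of_card_le hsub (by rw [hct_all e he f hf hef]; omega)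
    have hadjof : ∀ x y : V, s(x, y) ∈ Ct G P e f → G.Adj x y := by
      intro x y hxy
      exact (G.mem_edgeSet).1
        (SimpleGraph.mem_edgeFinset.1 (mem_Cset.1 (mem_Ct.1 hxy).1).1)
    refine ⟨hadjof _ _ ?_, hadjof _ _ ?_, hadjof _ _ ?_⟩ <;> rw [heq3] <;> simp
  have hclass : ∀ v : V, v ∈ Ust P ∨ ∃ e, ∃ he : e ∈ P, v = A e he ∨ v = B e he := by
    intro v
    by_cases hv : v ∈ Ust P
    · exact Or.inl hv
    · obtain ⟨e, he, hve⟩ := mem_W.1 (not_U_iff.1 hv)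
      exact Or.inr ⟨e, he, hmemAB e he v hve⟩
  set Xset := P.attach.image (fun ep => A ep.1 ep.2) with hXdef
  have hXmem : ∀ e (he : e ∈ P), A e he ∈ Xset :=
    fun e he => mem_image.2 ⟨⟨e, he⟩, mem_attach _ _, rfl⟩
  have hXiff : ∀ v, v ∈ Xset → ∃ e, ∃ he : e ∈ P, v = A e he := by
    intro v hv
    obtain ⟨⟨e, he⟩, _, hve⟩ := mem_image.1 hv
    exact ⟨e, he, hve.symm⟩
  have hXcard : Xset.card = s := by
    rw [hXdef, card_image_of_injOn, card_attach, hPc]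
    intro ep _ eq' _ hcon
    dsimp only at hcon
    have h1 : A ep.1 ep.2 ∈ (ep.1 : Sym2 V) := hAmem _ _
    have h2 : A ep.1 ep.2 ∈ (eq'.1 : Sym2 V) := by
      rw [hcon]
      exact hAmem _ _
    have heq' : (ep.1 : Sym2 V) = eq'.1 := by
      by_contra hne
      exact hPd ep.1 ep.2 eq'.1 eq'.2 hne _ h1 h2
    exact Subtype.ext heq'
  refine ⟨univ \ Xset, ?_, ?_⟩
  · rw [card_sdiff_of_subset (subset_univ _), card_univ, hXcard]
  intro u v huv
  have hmemS : ∀ w : V, w ∈ univ \ Xset ↔ w ∉ Xset := by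
    intro w
    rw [mem_sdiff]
    simp
  have hAdjAll : ∀ e (he : e ∈ P), ∀ z, z ≠ A e he → G.Adj (A e he) z := by
    intro e he z hz
    rcases hclass z with hzU | ⟨f, hf, hzf⟩
    · exact hAdj e he z hzU
    · by_cases hef : e = f
      · subst hef
        rcases hzf with h | h
        · exact absurd h hz
        · rw [h]
          have := hPE he
          rw [hEq e he] at this
          exact (G.mem_edgeSet).1 this
      · rcases hzf with h | h
        · rw [h]
          exact (hcross e he f hf hef).1
        · rw [h]
          exact (hcross e he f hf hef).2.1
  constructor
  · intro hadj hcon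
    obtain ⟨huS, hvS⟩ := hcon
    rw [hmemS] at huS hvS
    have hu' : u ∈ Ust P ∨ ∃ e, ∃ he : e ∈ P, u = B e he := by
      rcases hclass u with h | ⟨e, he, h | h⟩
      · exact Or.inl h
      · exact absurd (h ▸ hXmem e he) huS
      · exact Or.inr ⟨e, he, h⟩
    have hv' : v ∈ Ust P ∨ ∃ e, ∃ he : e ∈ P, v = B e he := by
      rcases hclass v with h | ⟨e, he, h | h⟩
      · exact Or.inl h
      · exact absurd (h ▸ hXmem e he) hvS
      · exact Or.inr ⟨e, he, h⟩
    rcases hu' with hu1 | ⟨e, he, hu1⟩ <;> rcases hv' with hv1 | ⟨f, hf, hv1⟩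
    · exact U_indep hPE hPd hPc hmax hu1 hv1 hadj
    · rw [hv1] at hadj
      exact hNAdj f hf u hu1 hadj.symm
    · rw [hu1] at hadj
      exact hNAdj e he v hv1 hadj
    · by_cases hef : e = f
      · subst hef
        exact huv (by rw [hu1, hv1])
      · rw [hu1, hv1] at hadj
        exact hBB e he f hf hef hadj
  · intro hcon
    have hX : u ∈ Xset ∨ v ∈ Xset := by
      by_contra hno
      push_neg at hno
      exact hcon ⟨(hmemS u).2 hno.1, (hmemS v).2 hno.2⟩
    rcases hX with h | h
    · obtain ⟨e, he, rfl⟩ := hXiff u h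
      exact hAdjAll e he v (Ne.symm huv)
    · obtain ⟨e, he, rfl⟩ := hXiff v h
      exact (hAdjAll e he u huv).symm

include hPE hPd hPc hmax in
lemma main_eq (hU4 : 4 ≤ (Ust P).card) (hsU : s < (Ust P).card) (hs1 : 1 ≤ s)
    (heq : G.edgeFinset.card = s + s * (Ust P).card + 3 * s.choose 2) :
    ∃ S : Finset V, S.card = Fintype.card V - s ∧
      ∀ u v : V, u ≠ v → (G.Adj u v ↔ ¬(u ∈ S ∧ v ∈ S)) := by
  have hU3 : 3 ≤ (Ust P).card := by omega
  have hdec := decomp hPE hPd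
  have hDi := D_card hPE hPd hPc hmax
  rcases Nat.lt_or_ge s 2 with hs | hs
  · -- s = 1
    have hs1' : s = 1 := by omega
    obtain ⟨e0, hP1⟩ := card_eq_one.1 (hPc.trans hs1')
    have he0 : e0 ∈ P := by rw [hP1]; exact mem_singleton_self e0
    have hC0 : (Cset G P).card = 0 := by
      have hCi := C_card hPE hPd
      have hoff : P.offDiag = ∅ := by rw [hP1]; simp
      rw [hoff, Finset.sum_empty] at hCi
      omega
    have hDsum : ∑ e ∈ P, (Dt G P e).card = (Dt G P e0).card := by
      rw [hP1, Finset.sum_singleton]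
    have hch : (1:ℕ).choose 2 = 0 := by decide
    rw [hs1', hch] at heq
    have hde0 : (Dt G P e0).card = (Ust P).card := by omega
    refine build_S hPE hPd hPc hmax hU3 ?_ ?_
    · intro e he
      rw [hP1, mem_singleton] at he
      rw [he]
      exact hde0
    · intro e he f hf hef
      rw [hP1, mem_singleton] at he hf
      exact absurd (he.trans hf.symm) hef
  · -- s ≥ 2
    obtain ⟨X, hsX⟩ : ∃ X, s = X + 1 := ⟨s - 1, by omega⟩
    have hX1 : 1 ≤ X := by omega
    have hs1x : s - 1 = X := by omega
    have hCi := C_card hPE hPd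
    have hod := offDiag_sum (P := P) (fun e => (Dt G P e).card)
    have hsplit : ∑ p ∈ P.offDiag,
        ((Dt G P p.1).card + (Dt G P p.2).card + (s-1) * (Ct G P p.1 p.2).card)
        = ∑ p ∈ P.offDiag, ((Dt G P p.1).card + (Dt G P p.2).card)
          + ∑ p ∈ P.offDiag, (s-1) * (Ct G P p.1 p.2).card := by
      rw [← Finset.sum_add_distrib]
    have hXct : ∑ p ∈ P.offDiag, (s-1) * (Ct G P p.1 p.2).card
        = (s-1) * (2 * (Cset G P).card) := by
      rw [← Finset.mul_sum, hCi]
    have hodc : P.offDiag.card = (X+1) * X := by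
      rw [Finset.offDiag_card, hPc, hsX]
      have hexp : (X+1) * (X+1) = (X+1) * X + (X+1) := by ring
      omega
    have h2c2 : 2 * s.choose 2 = (X+1) * X := by
      have ht := two_c2 s
      have hss : s * s = (X+1) * X + s := by rw [hsX]; ring
      omega
    have hR : (X+1) * X * (2 * (Ust P).card + 3 * X)
        = 2 * X * (s * (Ust P).card + 3 * s.choose 2) := by
      calc (X+1) * X * (2 * (Ust P).card + 3 * X)
          = (X+1) * X * (2 * (Ust P).card) + 3 * X * ((X+1) * X) := by ring
        _ = (X+1) * X * (2 * (Ust P).card) + 3 * X * (2 * s.choose 2) := by rw [h2c2]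
        _ = 2 * X * ((X+1) * (Ust P).card + 3 * s.choose 2) := by ring
        _ = 2 * X * (s * (Ust P).card + 3 * s.choose 2) := by rw [hsX]
    have hA : ∑ p ∈ P.offDiag, ((Dt G P p.1).card + (Dt G P p.2).card)
        + 2 * ∑ e ∈ P, (Dt G P e).card = 2 * (X+1) * ∑ e ∈ P, (Dt G P e).card := by
      rw [hPc, hsX] at hod
      exact hod
    have hA2 : ∑ p ∈ P.offDiag, ((Dt G P p.1).card + (Dt G P p.2).card)
        = 2 * X * ∑ e ∈ P, (Dt G P e).card := by
      have hexp2 : 2 * (X+1) * ∑ e ∈ P, (Dt G P e).card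
          = 2 * X * ∑ e ∈ P, (Dt G P e).card + 2 * ∑ e ∈ P, (Dt G P e).card := by ring
      omega
    have hDC : ∑ e ∈ P, (Dt G P e).card + (Cset G P).card
        = s * (Ust P).card + 3 * s.choose 2 := by omega
    have hsum_eq : ∑ p ∈ P.offDiag,
        ((Dt G P p.1).card + (Dt G P p.2).card + (s-1) * (Ct G P p.1 p.2).card)
        = ∑ _p ∈ P.offDiag, (2 * (Ust P).card + 3 * (s-1)) := by
      rw [hsplit, hXct, hA2, hs1x, Finset.sum_const, smul_eq_mul, hodc]
      calc 2 * X * ∑ e ∈ P, (Dt G P e).card + X * (2 * (Cset G P).card)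
          = 2 * X * (∑ e ∈ P, (Dt G P e).card + (Cset G P).card) := by ring
        _ = 2 * X * (s * (Ust P).card + 3 * s.choose 2) := by rw [hDC]
        _ = (X+1) * X * (2 * (Ust P).card + 3 * X) := hR.symm
    have hpt := (Finset.sum_eq_sum_iff_of_le (fun p hp => by
      obtain ⟨hp1, hp2, hpne⟩ := Finset.mem_offDiag.1 hp
      exact pair_bound hPE hPd hPc hmax hp1 hp2 hpne hU4 (le_of_lt hsU))).1 hsum_eq
    have hde_all : ∀ e, e ∈ P → (Dt G P e).card = (Ust P).card := by
      intro e he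
      obtain ⟨f, hf, hfe⟩ := Finset.exists_mem_ne (by omega : 1 < P.card) e
      have hp : (e, f) ∈ P.offDiag := Finset.mem_offDiag.2 ⟨he, hf, Ne.symm hfe⟩
      have ht := hpt (e, f) hp
      dsimp only at ht
      exact (pair_eq_struct hPE hPd hPc hmax he hf (Ne.symm hfe) hU4 hsU hs ht).1
    have hct_all : ∀ e, e ∈ P → ∀ f, f ∈ P → e ≠ f → (Ct G P e f).card = 3 := by
      intro e he f hf hef
      have hp : (e, f) ∈ P.offDiag := Finset.mem_offDiag.2 ⟨he, hf, hef⟩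
      have ht := hpt (e, f) hp
      dsimp only at ht
      exact (pair_eq_struct hPE hPd hPc hmax he hf hef hU4 hsU hs ht).2
    exact build_S hPE hPd hPc hmax hU3 hde_all hct_all

end Main

/-- Converse: counting edges of the structured graph. -/
lemma count_S (G : SimpleGraph V) (S : Finset V)
    (hS : ∀ u v : V, u ≠ v → (G.Adj u v ↔ ¬(u ∈ S ∧ v ∈ S))) :
    2 * G.edgeSet.ncard
      = (univ \ S).card * (Fintype.card V - 1) + S.card * (univ \ S).card := by
  haveI : DecidableRel G.Adj := Classical.decRel _
  have hdeg := G.sum_degrees_eq_twice_card_edges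
  have hEn : G.edgeSet.ncard = G.edgeFinset.card := by
    rw [← SimpleGraph.coe_edgeFinset, Set.ncard_coe_finset]
  have h1 : ∀ v ∈ univ \ S, G.degree v = Fintype.card V - 1 := by
    intro v hv
    have hvS : v ∉ S := (mem_sdiff.1 hv).2
    rw [SimpleGraph.degree]
    have hN : G.neighborFinset v = univ.erase v := by
      ext w
      rw [SimpleGraph.mem_neighborFinset, mem_erase]
      constructor
      · intro hadj
        exact ⟨(G.ne_of_adj hadj).symm, mem_univ w⟩
      · intro ⟨hwv, _⟩
        exact (hS v w (Ne.symm hwv)).2 (fun hc => hvS hc.1)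
    rw [hN, card_erase_of_mem (mem_univ v), card_univ]
  have h2 : ∀ v ∈ S, G.degree v = (univ \ S).card := by
    intro v hv
    rw [SimpleGraph.degree]
    have hN : G.neighborFinset v = univ \ S := by
      ext w
      rw [SimpleGraph.mem_neighborFinset, mem_sdiff]
      constructor
      · intro hadj
        refine ⟨mem_univ w, fun hwS => ?_⟩
        exact (hS v w (G.ne_of_adj hadj)).1 hadj ⟨hv, hwS⟩
      · intro ⟨_, hwS⟩
        have hvw : v ≠ w := fun hc => hwS (hc ▸ hv)
        exact (hS v w hvw).2 (fun hc => hwS hc.2)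
    rw [hN]
  have hsplitsum : ∑ v ∈ univ \ S, G.degree v + ∑ v ∈ S, G.degree v = ∑ v, G.degree v :=
    Finset.sum_sdiff (subset_univ S)
  have hs1 : ∑ v ∈ univ \ S, G.degree v = (univ \ S).card * (Fintype.card V - 1) := by
    rw [Finset.sum_congr rfl h1, Finset.sum_const, smul_eq_mul]
  have hs2 : ∑ v ∈ S, G.degree v = S.card * (univ \ S).card := by
    rw [Finset.sum_congr rfl h2, Finset.sum_const, smul_eq_mul]
  omega

end EG

theorem stmt14 (n k : ℕ) (hn : 0 < n) (hk : 0 < k) (hkn : k ≤ n)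
    (G : SimpleGraph (Fin (4*n)))
    (hex : ∃ M : G.Subgraph, M.IsMatching ∧ M.edgeSet.ncard = n - k)
    (hmax : ∀ M : G.Subgraph, M.IsMatching → M.edgeSet.ncard ≤ n - k) :
    G.edgeSet.ncard ≤ (4*n).choose 2 - (3*n+k).choose 2 ∧
    (G.edgeSet.ncard = (4*n).choose 2 - (3*n+k).choose 2 ↔
      ∃ S : Finset (Fin (4*n)), S.card = 3*n + k ∧
        ∀ u v : Fin (4*n), u ≠ v → (G.Adj u v ↔ ¬(u ∈ S ∧ v ∈ S))) := by
  classical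
  set s := n - k with hsdef
  obtain ⟨M, hM, hMc⟩ := hex
  obtain ⟨P, hPE, hPd, hPc0⟩ := EG.matching_finset M hM
  have hPc : P.card = s := by rw [hPc0, hMc]
  have hmaxF : ∀ Q : Finset (Sym2 (Fin (4*n))), ↑Q ⊆ G.edgeSet → EG.Pd Q → Q.card ≤ s :=
    fun Q h1 h2 => EG.card_le_of_max hmax Q h1 h2
  have hcardV : Fintype.card (Fin (4*n)) = 4*n := Fintype.card_fin _
  have hW := EG.W_card hPE hPd
  have hUc : (EG.Ust P).card = 2*n + 2*k := by
    rw [EG.Ust, card_sdiff_of_subset (subset_univ _), card_univ, hcardV, hW, hPc]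
    omega
  have hU4 : 4 ≤ (EG.Ust P).card := by omega
  have hsU : s < (EG.Ust P).card := by omega
  have hEn : G.edgeSet.ncard = G.edgeFinset.card := by
    rw [← SimpleGraph.coe_edgeFinset, Set.ncard_coe_finset]
  have hj : 2 * (s.choose 2) + s = s * s := EG.two_c2 s
  have h4n : 4*n = (3*n+k) + s := by omega
  have hch : (4*n).choose 2 = (3*n+k).choose 2 + s.choose 2 + (3*n+k)*s := by
    rw [h4n, EG.c2_add]
  have htgt : (4*n).choose 2 - (3*n+k).choose 2 = s.choose 2 + (3*n+k)*s := by omega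
  have hT : s.choose 2 + (3*n+k)*s = s + s*(2*n+2*k) + 3*(s.choose 2) := by
    have hnk : n = s + k := by omega
    have hmm : (3*n+k)*s = s*s + s*(2*n+2*k) := by rw [hnk]; ring
    omega
  have hle := EG.main_le hPE hPd hPc hmaxF hU4 hsU
  rw [hUc] at hle
  constructor
  · rw [hEn, htgt, hT]
    exact hle
  constructor
  · intro heqv
    rcases Nat.eq_zero_or_pos s with hs0 | hs1
    · -- s = 0, graph is empty
      have hE0 : G.edgeFinset.card = 0 := by
        rw [hs0] at hle
        simpa using hle
      refine ⟨univ, ?_, ?_⟩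
      · rw [card_univ, hcardV]
        omega
      · intro u v huv
        constructor
        · intro hadj
          exfalso
          have hmem : s(u, v) ∈ G.edgeFinset :=
            SimpleGraph.mem_edgeFinset.2 ((G.mem_edgeSet).2 hadj)
          have := Finset.card_pos.2 ⟨_, hmem⟩
          omega
        · intro h
          exact absurd ⟨mem_univ u, mem_univ v⟩ h
    · -- s ≥ 1
      have heq2 : G.edgeFinset.card = s + s*(2*n+2*k) + 3*(s.choose 2) := by omega
      obtain ⟨S, hScard, hSprop⟩ := EG.main_eq hPE hPd hPc hmaxF hU4 hsU hs1
        (by rw [hUc]; exact heq2)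
      refine ⟨S, ?_, hSprop⟩
      rw [hScard, hcardV]
      omega
  · rintro ⟨S, hScard, hSprop⟩
    have hcount := EG.count_S G S hSprop
    have hsd : (univ \ S).card = s := by
      rw [card_sdiff_of_subset (subset_univ _), card_univ, hcardV, hScard]
      omega
    rw [hsd, hScard, hcardV] at hcount
    rw [hEn, htgt]
    have hm : 4*n - 1 + 1 = 4*n := by omega
    have hb1 : s * (4*n - 1 + 1) = s * (4*n - 1) + s := by ring
    have hb2 : s * (4*n - 1 + 1) = s * (3*n+k) + s*s := by rw [hm, h4n]; ring
    have hb3 : s * (3*n+k) = (3*n+k) * s := by ring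
    omega
end

section
/- Let σ: E(K_{4n}) → {-1,1} with σ(E(K_{4n})) ≥ 0, let k ≥ 2, and suppose every perfect matching M satisfies |σ(M)| ≥ 2k. If moreover σ(M) > 0 for every perfect matching M, then the matching number of the graph G on V(K_{4n}) whose edges are the −1-labeled edges is at most n − k. -/
open Finset

def minusGraph (n : ℕ) (σ : Sym2 (Fin (4*n)) → ℤ) : SimpleGraph (Fin (4*n)) where
  Adj u v := u ≠ v ∧ σ s(u,v) = -1
  symm := by
    constructor
    intro u v h
    exact ⟨h.1.symm, by rw [Sym2.eq_swap]; exact h.2⟩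
  loopless := by
    constructor
    intro u h
    exact h.1 rfl

lemma matching_verts_ncard {V : Type*} [Fintype V] {G : SimpleGraph V} {M : G.Subgraph}
    (h : M.IsMatching) : M.verts.ncard = 2 * M.edgeSet.ncard := by
  classical
  haveI : Fintype M.verts := (Set.toFinite _).fintype
  have hdeg : ∀ v : M.verts, M.coe.degree v = 1 := by
    intro v
    have := (SimpleGraph.Subgraph.isMatching_iff_forall_degree.mp h) v.1 v.2
    rw [← SimpleGraph.Subgraph.coe_degree] at this
    convert this using 2
  have hsum := M.coe.sum_degrees_eq_twice_card_edges
  have h1 : M.verts.ncard = Fintype.card M.verts := by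
    rw [Set.ncard_eq_toFinset_card', Set.toFinset_card]
  have h2 : M.edgeSet.ncard = M.coe.edgeFinset.card := by
    rw [← SimpleGraph.Subgraph.image_coe_edgeSet_coe,
      Set.ncard_image_of_injective _ (Sym2.map.injective Subtype.val_injective),
      Set.ncard_eq_toFinset_card']
    exact congrArg Finset.card (by ext e; simp)
  rw [h1, h2]
  calc Fintype.card M.verts = ∑ _v : M.verts, 1 := by simp
    _ = 2 * M.coe.edgeFinset.card := by
        rw [← hsum]
        refine Finset.sum_congr rfl fun v _ => ?_
        have hv := hdeg v
        convert hv.symm using 2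

lemma sumE_union {m : ℕ} (σ : Sym2 (Fin m) → ℤ) {A B : Set (Sym2 (Fin m))}
    (h : Disjoint A B) : sumE σ (A ∪ B) = sumE σ A + sumE σ B := by
  unfold sumE
  rw [← Finset.sum_union]
  · congr 1
    ext e
    simp [Set.Finite.mem_toFinset]
  · rw [Finset.disjoint_left]
    intro e he he'
    rw [Set.Finite.mem_toFinset] at he he'
    exact Set.disjoint_left.mp h he he'

theorem stmt15 (n k : ℕ) (hn : 0 < n) (hk : 2 ≤ k) (σ : Sym2 (Fin (4*n)) → ℤ)
    (hσ : ∀ e ∈ (Kc (4*n)).edgeSet, σ e = 1 ∨ σ e = -1)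
    (hsum : 0 ≤ sumE σ (Kc (4*n)).edgeSet)
    (hbig : ∀ M : (Kc (4*n)).Subgraph, M.IsPerfectMatching →
      2*(k : ℤ) ≤ |sumE σ M.edgeSet|)
    (hpos : ∀ M : (Kc (4*n)).Subgraph, M.IsPerfectMatching → 0 < sumE σ M.edgeSet) :
    ∀ M : (minusGraph n σ).Subgraph, M.IsMatching →
      (M.edgeSet.ncard : ℤ) ≤ (n : ℤ) - (k : ℤ) := by
  classical
  intro M hM
  by_contra hcon
  push_neg at hcon
  set ν := M.edgeSet.ncard with hν
  -- the matching viewed inside the complete graph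
  let M1 : (Kc (4*n)).Subgraph :=
    ⟨M.verts, M.Adj, fun h => (M.adj_sub h).1, M.edge_vert, M.symm⟩
  have hM1 : M1.IsMatching := fun v hv => hM hv
  have hE1 : M1.edgeSet = M.edgeSet := rfl
  have hv2 : M.verts.ncard = 2 * ν := matching_verts_ncard hM
  set S : Set (Fin (4*n)) := M.vertsᶜ with hSdef
  have hcards : S.ncard + 2 * ν = 4 * n := by
    have h0 := Set.ncard_add_ncard_compl M.verts
    simp only [Nat.card_eq_fintype_card, Fintype.card_fin] at h0
    show M.vertsᶜ.ncard + 2 * ν = 4 * n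
    omega
  have hν2n : ν ≤ 2 * n := by omega
  set m' : ℕ := 2*n - ν with hm'
  have hScard : S.ncard = 2 * m' := by omega
  -- split S into two halves
  set F : Finset (Fin (4*n)) := S.toFinset with hF
  have hFcard : F.card = 2 * m' := by
    rw [hF, ← Set.ncard_eq_toFinset_card']; exact hScard
  obtain ⟨s, hsub, hscard⟩ := Finset.exists_subset_card_eq (show m' ≤ F.card by omega)
  set t : Finset (Fin (4*n)) := F \ s with ht
  have htcard : t.card = m' := by rw [ht, Finset.card_sdiff_of_subset hsub]; omega
  have hdisj : Disjoint (↑s : Set (Fin (4*n))) (↑t) := by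
    rw [Set.disjoint_iff_forall_ne]
    intro a ha b hb
    rw [Finset.mem_coe] at ha hb
    rw [ht, Finset.mem_sdiff] at hb
    exact fun hab => hb.2 (hab ▸ ha)
  have hcardeq : Fintype.card (↑(↑s : Set (Fin (4*n)))) = Fintype.card (↑(↑t : Set (Fin (4*n)))) := by
    simp [hscard, htcard]
  let f := Fintype.equivOfCardEq hcardeq
  obtain ⟨Mex, hMexverts, hMexmatch⟩ :=
    SimpleGraph.Subgraph.IsMatching.exists_of_disjoint_sets_of_equiv (G := Kc (4*n)) hdisj f
      (fun v => by
        have : (v : Fin (4*n)) ≠ ((f v : Fin (4*n))) :=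
          Set.disjoint_left.mp hdisj v.2 ∘ fun h => h ▸ (f v).2
        exact this)
  have hMexverts' : Mex.verts = S := by
    rw [hMexverts, ← Finset.coe_union, ht, Finset.union_sdiff_of_subset hsub, hF,
      Set.coe_toFinset]
  -- the perfect matching
  set PM : (Kc (4*n)).Subgraph := M1 ⊔ Mex with hPM
  have hPMmatch : PM.IsMatching := by
    refine hM1.sup hMexmatch ?_
    rw [hM1.support_eq_verts, hMexmatch.support_eq_verts, hMexverts']
    exact disjoint_compl_right
  have hPMspan : PM.IsSpanning := by
    intro v
    show v ∈ M1.verts ∪ Mex.verts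
    rw [hMexverts']
    show v ∈ M.verts ∪ M.vertsᶜ
    rw [Set.union_compl_self]
    trivial
  have hperf : PM.IsPerfectMatching := ⟨hPMmatch, hPMspan⟩
  -- edge set decomposition
  have hEdisj : Disjoint M.edgeSet Mex.edgeSet := by
    rw [Set.disjoint_left]
    intro e he he'
    induction e with
    | h u v =>
      rw [SimpleGraph.Subgraph.mem_edgeSet] at he he'
      have h1 : u ∈ M.verts := M.edge_vert he
      have h2 : u ∈ Mex.verts := Mex.edge_vert he'
      rw [hMexverts'] at h2
      exact h2 h1
  have hEsup : PM.edgeSet = M.edgeSet ∪ Mex.edgeSet := by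
    rw [hPM, SimpleGraph.Subgraph.edgeSet_sup, hE1]
  -- sum over M's edges equals -ν
  have hsumM : sumE σ M.edgeSet = -(ν : ℤ) := by
    unfold sumE
    have : ∀ e ∈ M.edgeSet.toFinite.toFinset, σ e = -1 := by
      intro e he
      rw [Set.Finite.mem_toFinset] at he
      induction e with
      | h u v =>
        rw [SimpleGraph.Subgraph.mem_edgeSet] at he
        exact (M.adj_sub he).2
    rw [Finset.sum_congr rfl this, Finset.sum_const, hν,
      Set.ncard_eq_toFinset_card M.edgeSet (Set.toFinite _)]
    simp
  -- count of Mex edges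
  have hMexcount : Mex.edgeSet.ncard = m' := by
    have := matching_verts_ncard hMexmatch
    rw [hMexverts', hScard] at this
    omega
  -- sum over Mex's edges is at most m'
  have hsumMex : sumE σ Mex.edgeSet ≤ (m' : ℤ) := by
    unfold sumE
    calc ∑ e ∈ Mex.edgeSet.toFinite.toFinset, σ e
        ≤ ∑ _e ∈ Mex.edgeSet.toFinite.toFinset, (1 : ℤ) := by
          refine Finset.sum_le_sum fun e he => ?_
          rw [Set.Finite.mem_toFinset] at he
          rcases hσ e (Mex.edgeSet_subset he) with h1 | h1 <;> omega
      _ = (m' : ℤ) := by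
          rw [Finset.sum_const, ← Set.ncard_eq_toFinset_card Mex.edgeSet (Set.toFinite _),
            hMexcount]
          simp
  have htotal : sumE σ PM.edgeSet ≤ (m' : ℤ) - ν := by
    rw [hEsup, sumE_union σ hEdisj, hsumM]
    omega
  have hb := hbig PM hperf
  have hp := hpos PM hperf
  rw [abs_of_pos hp] at hb
  have hm'int : (m' : ℤ) = 2*(n : ℤ) - (ν : ℤ) := by omega
  omega
end
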